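/- arXiv:1604.06377 — 7 statements merged into one kernel-verified Lean document; each statement's English description precedes it below -/
import Mathlib

section
/- For any two probability measures P and Q on the same measurable space, both absolutely continuous with respect to a common measure, and any measurable event A, we have P(A) + Q(Aᶜ) ≥ (1/2) · exp(−min(KL(P‖Q), KL(Q‖P))), where KL denotes the Kullback–Leibler divergence. -/
open MeasureTheory Real
open scoped ENNReal

open Classical in
/-- KL divergence of `P` with respect to `Q`, valued in `ℝ≥0∞` (possibly `∞`). -/
noncomputable def klDiv {α : Type*} [MeasurableSpace α] (P Q : Measure α) : ℝ≥0∞ :=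
  if P ≪ Q ∧ Integrable (llr P Q) P then ENNReal.ofReal (∫ x, llr P Q x ∂P) else ⊤

/-- `exp(-x)` for `x : ℝ≥0∞`, with the convention `exp(-∞) = 0`. -/
noncomputable def expNeg (x : ℝ≥0∞) : ℝ :=
  if x = ⊤ then 0 else Real.exp (-x.toReal)


lemma sqrt_le_one_add {t : ℝ} (ht : 0 ≤ t) : Real.sqrt t ≤ 1 + t := by
  nlinarith [Real.sq_sqrt ht, Real.sqrt_nonneg t]

-- core: exp(-K) ≤ 2 * T
lemma BH_core {α : Type*} [MeasurableSpace α] (P Q : Measure α) [IsProbabilityMeasure P]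
    [IsProbabilityMeasure Q] (hPQ : P ≪ Q) (hint : Integrable (llr P Q) P)
    {A : Set α} (hA : MeasurableSet A) :
    Real.exp (-∫ x, llr P Q x ∂P) ≤ 2 * ((P A).toReal + (Q Aᶜ).toReal) := by
  set d := Q.rnDeriv P with hd
  set T := (P A).toReal + (Q Aᶜ).toReal with hT
  have hTnn : 0 ≤ T := by positivity
  -- lintegral bounds
  have hmin : ∫⁻ x, min (d x) 1 ∂P ≤ P A + Q Aᶜ := by
    rw [← lintegral_add_compl _ hA]
    gcongr
    · calc ∫⁻ x in A, min (d x) 1 ∂P ≤ ∫⁻ _ in A, 1 ∂P :=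
          lintegral_mono fun x => min_le_right _ _
      _ = P A := by simp [hA]
    · calc ∫⁻ x in Aᶜ, min (d x) 1 ∂P ≤ ∫⁻ x in Aᶜ, d x ∂P :=
          lintegral_mono fun x => min_le_left _ _
      _ ≤ Q Aᶜ := Measure.setLIntegral_rnDeriv_le _
  have hmax : ∫⁻ x, max (d x) 1 ∂P ≤ 2 := by
    calc ∫⁻ x, max (d x) 1 ∂P ≤ ∫⁻ x, d x + 1 ∂P :=
        lintegral_mono fun x => max_le (le_add_of_nonneg_right zero_le') le_add_self
    _ = (∫⁻ x, d x ∂P) + 1 := by rw [lintegral_add_right _ measurable_const]; simp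
    _ ≤ 1 + 1 := by gcongr; simpa using Q.lintegral_rnDeriv_le
    _ = 2 := one_add_one_eq_two
  -- Cauchy-Schwarz
  have hCS : ∫⁻ x, (d x) ^ (1/2 : ℝ) ∂P ≤ (P A + Q Aᶜ) ^ (1/2 : ℝ) * 2 ^ (1/2 : ℝ) := by
    have hm : AEMeasurable (fun x => (min (d x) 1) ^ (1/2 : ℝ)) P :=
      ((Q.measurable_rnDeriv P).min measurable_const).pow_const _ |>.aemeasurable
    have hM : AEMeasurable (fun x => (max (d x) 1) ^ (1/2 : ℝ)) P :=
      ((Q.measurable_rnDeriv P).max measurable_const).pow_const _ |>.aemeasurable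
    have hpq : (2 : ℝ).HolderConjugate 2 := Real.HolderConjugate.two_two
    have key := ENNReal.lintegral_mul_le_Lp_mul_Lq P hpq hm hM
    simp only [Pi.mul_apply] at key
    calc ∫⁻ x, (d x) ^ (1/2 : ℝ) ∂P
        = ∫⁻ x, (min (d x) 1) ^ (1/2 : ℝ) * (max (d x) 1) ^ (1/2 : ℝ) ∂P := by
          refine lintegral_congr fun x => ?_
          rw [← ENNReal.mul_rpow_of_nonneg _ _ (by norm_num), min_mul_max, mul_one]
      _ ≤ (∫⁻ x, ((min (d x) 1) ^ (1/2 : ℝ)) ^ (2:ℝ) ∂P) ^ (1/2 : ℝ) *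
          (∫⁻ x, ((max (d x) 1) ^ (1/2 : ℝ)) ^ (2:ℝ) ∂P) ^ (1/2 : ℝ) := key
      _ = (∫⁻ x, min (d x) 1 ∂P) ^ (1/2 : ℝ) * (∫⁻ x, max (d x) 1 ∂P) ^ (1/2 : ℝ) := by
          simp_rw [← ENNReal.rpow_mul]; norm_num
      _ ≤ (P A + Q Aᶜ) ^ (1/2 : ℝ) * 2 ^ (1/2 : ℝ) := by
          gcongr <;> norm_num
  -- integrability of sqrt
  have hrInt : Integrable (fun x => (d x).toReal) P := Measure.integrable_toReal_rnDeriv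
  have hsInt : Integrable (fun x => Real.sqrt ((d x).toReal)) P := by
    refine Integrable.mono' ((integrable_const (1:ℝ)).add hrInt)
      ((Q.measurable_rnDeriv P).ennreal_toReal.sqrt.aestronglyMeasurable) ?_
    filter_upwards with x
    simp only [Pi.add_apply, Real.norm_eq_abs, abs_of_nonneg (Real.sqrt_nonneg _)]
    exact sqrt_le_one_add ENNReal.toReal_nonneg
  -- real integral of sqrt equals lintegral
  have hfin : ∀ᵐ x ∂P, d x < ⊤ := Q.rnDeriv_lt_top P
  have hreal : ∫ x, Real.sqrt ((d x).toReal) ∂P = (∫⁻ x, (d x) ^ (1/2 : ℝ) ∂P).toReal := by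
    rw [integral_eq_lintegral_of_nonneg_ae (Filter.Eventually.of_forall fun x => Real.sqrt_nonneg _)
        ((Q.measurable_rnDeriv P).ennreal_toReal.sqrt.aestronglyMeasurable)]
    congr 1
    refine lintegral_congr_ae ?_
    filter_upwards [hfin] with x hx
    rw [Real.sqrt_eq_rpow, ENNReal.toReal_rpow, ENNReal.ofReal_toReal]
    exact (ENNReal.rpow_lt_top_of_nonneg (by norm_num) hx.ne).ne
  -- bound the real integral
  have hS : ∫ x, Real.sqrt ((d x).toReal) ∂P ≤ Real.sqrt T * Real.sqrt 2 := by
    rw [hreal]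
    have hne : (P A + Q Aᶜ) ^ (1/2 : ℝ) * 2 ^ (1/2 : ℝ) ≠ ⊤ := by
      refine ENNReal.mul_ne_top ?_ ?_ <;>
        exact (ENNReal.rpow_lt_top_of_nonneg (by norm_num) (by finiteness)).ne
    refine le_trans (ENNReal.toReal_mono hne hCS) ?_
    rw [ENNReal.toReal_mul, ← ENNReal.toReal_rpow, ← ENNReal.toReal_rpow,
      ENNReal.toReal_add (measure_ne_top _ _) (measure_ne_top _ _)]
    simp [Real.sqrt_eq_rpow, hT]
  -- Jensen
  have hexp : (fun x => Real.exp (-(1/2 : ℝ) * llr P Q x)) =ᵐ[P]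
      fun x => Real.sqrt ((d x).toReal) := by
    filter_upwards [exp_neg_llr hPQ] with x hx
    rw [show -(1/2 : ℝ) * llr P Q x = (- llr P Q x) / 2 by ring, Real.exp_half, hx]
  have hJ : Real.exp (∫ x, -(1/2 : ℝ) * llr P Q x ∂P) ≤ ∫ x, Real.sqrt ((d x).toReal) ∂P := by
    rw [← integral_congr_ae hexp]
    exact convexOn_exp.map_integral_le continuous_exp.continuousOn isClosed_univ
      (Filter.Eventually.of_forall fun x => Set.mem_univ _) (hint.const_mul _)
      (hsInt.congr hexp.symm)
  have h1 : Real.exp (-(1/2 : ℝ) * ∫ x, llr P Q x ∂P) ≤ Real.sqrt (2 * T) := by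
    calc Real.exp (-(1/2 : ℝ) * ∫ x, llr P Q x ∂P)
        = Real.exp (∫ x, -(1/2 : ℝ) * llr P Q x ∂P) := by rw [integral_const_mul]
      _ ≤ ∫ x, Real.sqrt ((d x).toReal) ∂P := hJ
      _ ≤ Real.sqrt T * Real.sqrt 2 := hS
      _ = Real.sqrt (2 * T) := by rw [← Real.sqrt_mul hTnn, mul_comm]
  have := mul_self_le_mul_self (Real.exp_pos _).le h1
  rw [← Real.exp_add, Real.mul_self_sqrt (by positivity)] at this
  calc Real.exp (-∫ x, llr P Q x ∂P)
      = Real.exp (-(1/2 : ℝ) * ∫ x, llr P Q x ∂P + -(1/2 : ℝ) * ∫ x, llr P Q x ∂P) := by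
        ring_nf
    _ ≤ 2 * T := this


lemma BH_one_sided {α : Type*} [MeasurableSpace α] (P Q : Measure α) [IsProbabilityMeasure P]
    [IsProbabilityMeasure Q] {A : Set α} (hA : MeasurableSet A) :
    (1 / 2 : ℝ) * expNeg (klDiv P Q) ≤ (P A).toReal + (Q Aᶜ).toReal := by
  by_cases h : P ≪ Q ∧ Integrable (llr P Q) P
  · have hkl : klDiv P Q = ENNReal.ofReal (∫ x, llr P Q x ∂P) := if_pos h
    have hne : klDiv P Q ≠ ⊤ := by rw [hkl]; exact ENNReal.ofReal_ne_top
    rw [expNeg, if_neg hne, hkl, ENNReal.toReal_ofReal']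
    have hcore := BH_core P Q h.1 h.2 hA
    have hmono : Real.exp (-max (∫ x, llr P Q x ∂P) 0) ≤ Real.exp (-∫ x, llr P Q x ∂P) :=
      Real.exp_le_exp.2 (neg_le_neg (le_max_left _ _))
    linarith
  · rw [expNeg, klDiv, if_neg h, if_pos rfl]
    simp only [mul_zero]
    positivity

/-- For probability measures `P`, `Q` absolutely continuous with respect to a common measure `ν`,
and any measurable event `A`,
`P(A) + Q(Aᶜ) ≥ (1/2) exp(-min(KL(P‖Q), KL(Q‖P)))`. -/
theorem tsybakov_two_measures {α : Type*} [MeasurableSpace α]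
    (P Q ν : Measure α) [IsProbabilityMeasure P] [IsProbabilityMeasure Q]
    (hPν : P ≪ ν) (hQν : Q ≪ ν) {A : Set α} (hA : MeasurableSet A) :
    (P A).toReal + (Q Aᶜ).toReal ≥ (1 / 2) * expNeg (min (klDiv P Q) (klDiv Q P)) := by
  rcases min_cases (klDiv P Q) (klDiv Q P) with ⟨hmin, _⟩ | ⟨hmin, _⟩
  · rw [hmin]
    exact BH_one_sided P Q hA
  · rw [hmin]
    have := BH_one_sided Q P (A := Aᶜ) hA.compl
    rw [compl_compl] at this
    linarith
end

section
/- For probabilities p, q ∈ [0,1], the inequality p + q ≥ (1/2) · ((1−q)/p)^p · (q/(1−p))^(1−p) holds (interpreting the right-hand side via the convention 0^0 = 1 and as 0 when division by zero makes it degenerate). -/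
open Real

/-- For `p, q ∈ [0,1]`, `p + q ≥ (1/2) ((1-q)/p)^p (q/(1-p))^(1-p)`, where real powers
are interpreted with the conventions `0^0 = 1` and `x/0 = 0`. -/
theorem binary_kl_sum_lower_bound {p q : ℝ}
    (hp0 : 0 ≤ p) (hp1 : p ≤ 1) (hq0 : 0 ≤ q) (hq1 : q ≤ 1) :
    p + q ≥ (1 / 2) * ((1 - q) / p) ^ p * (q / (1 - p)) ^ (1 - p) := by
  set a : ℝ := (1 - q) / p with ha_def
  set b : ℝ := q / (1 - p) with hb_def
  have ha : 0 ≤ a := div_nonneg (by linarith) hp0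
  have hb : 0 ≤ b := div_nonneg hq0 (by linarith)
  set s : ℝ := Real.sqrt a with hs_def
  set t : ℝ := Real.sqrt b with ht_def
  have hs : 0 ≤ s := Real.sqrt_nonneg a
  have ht : 0 ≤ t := Real.sqrt_nonneg b
  have hsa : s * s = a := Real.mul_self_sqrt ha
  have htb : t * t = b := Real.mul_self_sqrt hb
  have key : a ^ p * b ^ (1 - p) = (s ^ p * t ^ (1 - p)) ^ 2 := by
    rw [← hsa, ← htb, Real.mul_rpow hs hs, Real.mul_rpow ht ht]
    ring
  have gm : s ^ p * t ^ (1 - p) ≤ p * s + (1 - p) * t :=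
    Real.geom_mean_le_arith_mean2_weighted hp0 (by linarith) hs ht (by ring)
  have hst : 0 ≤ s ^ p * t ^ (1 - p) :=
    mul_nonneg (Real.rpow_nonneg hs p) (Real.rpow_nonneg ht (1 - p))
  have ka : p ^ 2 * a = p * (1 - q) := by
    rcases eq_or_lt_of_le hp0 with h | h
    · simp [← h, ha_def]
    · rw [ha_def]; field_simp
  have kb : (1 - p) ^ 2 * b = (1 - p) * q := by
    rcases eq_or_lt_of_le hp1 with h | h
    · rw [hb_def, h]; simp
    · have h1p : (1:ℝ) - p ≠ 0 := by linarith
      rw [hb_def]; field_simp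
  have h2 : (1 / 2 : ℝ) * a ^ p * b ^ (1 - p) ≤ p + q := by
    rw [mul_assoc, key]
    nlinarith [sq_nonneg (p * s - (1 - p) * t), mul_nonneg hp0 hq0, gm, hst,
      sq_nonneg (p * s + (1 - p) * t)]
  linarith
end

section
/- For real numbers p, q ∈ (0,1), we have ((1−q)/p)^p · (q/(1−p))^(1−p) ≤ (√(p(1−q)) + √(q(1−p)))², and consequently ((1−q)/p)^p · (q/(1−p))^(1−p) ≤ 2(p(1−q) + q(1−p)) ≤ 2(p+q). -/
open Real

/-- For `p, q ∈ (0,1)`: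
`((1-q)/p)^p (q/(1-p))^(1-p) ≤ (√(p(1-q)) + √(q(1-p)))² ≤ 2(p(1-q) + q(1-p)) ≤ 2(p+q)`. -/
theorem binary_kl_amgm_chain {p q : ℝ}
    (hp0 : 0 < p) (hp1 : p < 1) (hq0 : 0 < q) (hq1 : q < 1) :
    ((1 - q) / p) ^ p * (q / (1 - p)) ^ (1 - p)
        ≤ (Real.sqrt (p * (1 - q)) + Real.sqrt (q * (1 - p))) ^ (2 : ℕ) ∧
      (Real.sqrt (p * (1 - q)) + Real.sqrt (q * (1 - p))) ^ (2 : ℕ)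
        ≤ 2 * (p * (1 - q) + q * (1 - p)) ∧
      2 * (p * (1 - q) + q * (1 - p)) ≤ 2 * (p + q) := by
  have h1p : (0:ℝ) < 1 - p := by linarith
  have h1q : (0:ℝ) < 1 - q := by linarith
  set s := Real.sqrt (p * (1 - q)) with hs_def
  set t := Real.sqrt (q * (1 - p)) with ht_def
  have hs2 : s ^ 2 = p * (1 - q) := Real.sq_sqrt (by positivity)
  have ht2 : t ^ 2 = q * (1 - p) := Real.sq_sqrt (by positivity)
  refine ⟨?_, by nlinarith [sq_nonneg (s - t)], by nlinarith⟩
  set x := Real.sqrt ((1 - q) / p) with hx_def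
  set y := Real.sqrt (q / (1 - p)) with hy_def
  have hx : 0 ≤ x := Real.sqrt_nonneg _
  have hy : 0 ≤ y := Real.sqrt_nonneg _
  have hx2 : x * x = (1 - q) / p := Real.mul_self_sqrt (by positivity)
  have hy2 : y * y = q / (1 - p) := Real.mul_self_sqrt (by positivity)
  have hg : x ^ p * y ^ (1 - p) ≤ p * x + (1 - p) * y :=
    Real.geom_mean_le_arith_mean2_weighted hp0.le h1p.le hx hy (by ring)
  have hpx : p * x = s := by
    rw [hs_def, hx_def, show p * (1 - q) = p ^ 2 * ((1 - q) / p) by field_simp,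
      Real.sqrt_mul (by positivity), Real.sqrt_sq hp0.le]
  have hqy : (1 - p) * y = t := by
    rw [ht_def, hy_def, show q * (1 - p) = (1 - p) ^ 2 * (q / (1 - p)) by field_simp,
      Real.sqrt_mul (by positivity), Real.sqrt_sq h1p.le]
  calc ((1 - q) / p) ^ p * (q / (1 - p)) ^ (1 - p)
      = (x * x) ^ p * ((y * y) ^ (1 - p)) := by rw [hx2, hy2]
    _ = (x ^ p * y ^ (1 - p)) ^ (2 : ℕ) := by
        rw [Real.mul_rpow hx hx, Real.mul_rpow hy hy]; ring
    _ ≤ (p * x + (1 - p) * y) ^ (2 : ℕ) := by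
        apply pow_le_pow_left₀ (by positivity) hg
    _ = (s + t) ^ (2 : ℕ) := by rw [hpx, hqy]
end

section
/- The binary Kullback–Leibler divergence satisfies the data-processing style inequality: if P and Q are probability measures and A is an event with p = P(A) and q = Q(Aᶜ), then KL(P‖Q) ≥ kl(p, 1−q), where kl(a,b) = a·log(a/b) + (1−a)·log((1−a)/(1−b)) is the divergence between Bernoulli(a) and Bernoulli(b). -/
open MeasureTheory Real
open scoped ENNReal

open Classical in
/-- Binary (Bernoulli) KL divergence `kl(a,b)`, with the conventions `0 log 0 = 0` and
`x log (x/0) = +∞` for `x > 0`. -/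
noncomputable def klBin (a b : ℝ) : ℝ≥0∞ :=
  if (b = 0 ∧ a ≠ 0) ∨ (b = 1 ∧ a ≠ 1) then ⊤
  else ENNReal.ofReal (a * Real.log (a / b) + (1 - a) * Real.log ((1 - a) / (1 - b)))

lemma setIntegral_llr_ge_aux {α : Type*} [MeasurableSpace α]
    (P Q : Measure α) [IsFiniteMeasure P] [IsFiniteMeasure Q]
    (hPQ : P ≪ Q) (hInt : Integrable (llr P Q) P) {B : Set α} (hB : MeasurableSet B) :
    (P B).toReal * Real.log ((P B).toReal / (Q B).toReal) ≤ ∫ x in B, llr P Q x ∂P := by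
  by_cases hPB : P B = 0
  · simp [hPB, Measure.restrict_eq_zero.2 hPB]
  have hQB : Q B ≠ 0 := fun h => hPB (hPQ h)
  set a : ℝ := (P B).toReal with ha
  set b : ℝ := (Q B).toReal with hb
  have hb0 : 0 < b := ENNReal.toReal_pos hQB (measure_ne_top _ _)
  have ha0 : 0 < a := ENNReal.toReal_pos hPB (measure_ne_top _ _)
  set ν : Measure α := (Q B)⁻¹ • Q.restrict B with hν
  have hres : (Q.restrict B) Set.univ = Q B := by
    simp [Measure.restrict_apply_univ]
  have : NeZero (Q.restrict B) := ⟨by simp [← Measure.measure_univ_eq_zero, hres, hQB]⟩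
  have hprob : IsProbabilityMeasure ν := by
    rw [hν, show (Q B)⁻¹ = ((Q.restrict B) Set.univ)⁻¹ by rw [hres]]
    infer_instance
  set f : α → ℝ := fun x => (P.rnDeriv Q x).toReal with hf
  have hinvne : (Q B)⁻¹ ≠ ∞ := by simp [hQB]
  have hfint : Integrable f ν := by
    exact ((Measure.integrable_toReal_rnDeriv (μ := P) (ν := Q)).restrict).smul_measure hinvne
  have hfeq : (fun x => f x * Real.log (f x)) = fun x => f x • llr P Q x := by
    funext x; simp [hf, llr_def, smul_eq_mul]
  have hφint : Integrable (fun x => f x * Real.log (f x)) ν := by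
    rw [hfeq]
    exact (((integrable_rnDeriv_smul_iff hPQ).2 hInt).restrict).smul_measure hinvne
  have hmem : ∀ᵐ x ∂ν, f x ∈ Set.Ici (0 : ℝ) := by
    filter_upwards with x using ENNReal.toReal_nonneg
  have hj := Real.convexOn_mul_log.map_integral_le Real.continuous_mul_log.continuousOn
    isClosed_Ici hmem hfint (by exact hφint)
  have Ia : ∫ x, f x ∂ν = b⁻¹ * a := by
    rw [hν, integral_smul_measure, Measure.setIntegral_toReal_rnDeriv hPQ B]
    simp [smul_eq_mul, ENNReal.toReal_inv, ha, hb, Measure.real]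
  have Iφ : ∫ x, f x * Real.log (f x) ∂ν = b⁻¹ * ∫ x in B, llr P Q x ∂P := by
    rw [hfeq, hν, integral_smul_measure, setIntegral_rnDeriv_smul hPQ hB]
    simp [smul_eq_mul, ENNReal.toReal_inv, hb]
  rw [Ia] at hj
  rw [Iφ] at hj
  have key : b * ((b⁻¹ * a) * Real.log (b⁻¹ * a)) ≤
      b * (b⁻¹ * ∫ x in B, llr P Q x ∂P) :=
    mul_le_mul_of_nonneg_left hj hb0.le
  have h1 : b⁻¹ * a = a / b := by field_simp
  have h2 : b * ((b⁻¹ * a) * Real.log (b⁻¹ * a)) = a * Real.log (a / b) := by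
    rw [h1]; field_simp
  have h3 : b * (b⁻¹ * ∫ x in B, llr P Q x ∂P) = ∫ x in B, llr P Q x ∂P := by
    field_simp
  rw [h2, h3] at key
  exact key

/-- Data-processing inequality for the binary KL divergence: if `p = P(A)` and `q = Q(Aᶜ)`,
then `KL(P‖Q) ≥ kl(p, 1 - q)`. -/
theorem klDiv_ge_klBin {α : Type*} [MeasurableSpace α]
    (P Q : Measure α) [IsProbabilityMeasure P] [IsProbabilityMeasure Q]
    (hPQ : P ≪ Q) {A : Set α} (hA : MeasurableSet A) :
    klDiv P Q ≥ klBin (P A).toReal (1 - (Q Aᶜ).toReal) := by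
  by_cases hI : Integrable (llr P Q) P
  · have hsum : (Q A).toReal + (Q Aᶜ).toReal = 1 := by
      rw [← ENNReal.toReal_add (measure_ne_top _ _) (measure_ne_top _ _),
        prob_add_prob_compl hA, ENNReal.toReal_one]
    have hsumP : (P A).toReal + (P Aᶜ).toReal = 1 := by
      rw [← ENNReal.toReal_add (measure_ne_top _ _) (measure_ne_top _ _),
        prob_add_prob_compl hA, ENNReal.toReal_one]
    have hb' : 1 - (Q Aᶜ).toReal = (Q A).toReal := by linarith
    have hcond : ¬((1 - (Q Aᶜ).toReal = 0 ∧ (P A).toReal ≠ 0) ∨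
        (1 - (Q Aᶜ).toReal = 1 ∧ (P A).toReal ≠ 1)) := by
      push_neg
      constructor
      · intro h0
        rw [hb'] at h0
        have hQA : Q A = 0 := by
          rcases (ENNReal.toReal_eq_zero_iff (Q A)).1 h0 with h | h
          · exact h
          · exact absurd h (measure_ne_top _ _)
        simp [hPQ hQA]
      · intro h1
        rw [hb'] at h1
        have hQc : (Q Aᶜ).toReal = 0 := by linarith
        have : Q Aᶜ = 0 := by
          have := ENNReal.toReal_eq_zero_iff (Q Aᶜ)
          rcases this.1 hQc with h | h
          · exact h
          · exact absurd h (measure_ne_top _ _)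
        have hPc : P Aᶜ = 0 := hPQ this
        have : (P Aᶜ).toReal = 0 := by simp [hPc]
        linarith
    rw [ge_iff_le, klDiv, if_pos ⟨hPQ, hI⟩, klBin, if_neg hcond]
    apply ENNReal.ofReal_le_ofReal
    rw [← integral_add_compl hA hI]
    have h1 := setIntegral_llr_ge_aux P Q hPQ hI hA
    have h2 := setIntegral_llr_ge_aux P Q hPQ hI hA.compl
    have ePc : (P Aᶜ).toReal = 1 - (P A).toReal := by linarith
    have eQc : (Q Aᶜ).toReal = 1 - (1 - (Q Aᶜ).toReal) := by ring
    rw [ePc] at h2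
    nth_rw 1 [eQc] at h2
    rw [← hb'] at h1
    exact add_le_add h1 h2
  · rw [ge_iff_le, klDiv, if_neg (fun h => hI h.2)]
    exact le_top
end

section
/- Let {a_n} be a bounded sequence of real numbers. If there exist constants C > 0 and n₀ such that ∑_{m=1}^{n} a_m ≥ C·log n for all n ≥ n₀, then a_n ≥ C/(2n) for infinitely many n. -/
open Real Filter

/-- If a bounded sequence `a` satisfies `∑_{m=1}^n a_m ≥ C log n` for all `n ≥ n₀`,
with `C > 0`, then `a_n ≥ C/(2n)` for infinitely many `n`. -/
theorem frequently_ge_of_partial_sums_ge_log (a : ℕ → ℝ) (M : ℝ)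
    (hbdd : ∀ n, |a n| ≤ M) {C : ℝ} (hC : 0 < C) (n₀ : ℕ)
    (hsum : ∀ n, n₀ ≤ n → C * Real.log n ≤ ∑ m ∈ Finset.Icc 1 n, a m) :
    ∃ᶠ n in atTop, C / (2 * n) ≤ a n := by
  by_contra h
  rw [Filter.not_frequently] at h
  obtain ⟨N, hN⟩ := Filter.eventually_atTop.1 h
  set b := max N (max n₀ 1) with hb
  have hb1 : 1 ≤ b := le_trans (le_max_right n₀ 1) (le_max_right _ _)
  have hbn0 : n₀ ≤ b := le_trans (le_max_left n₀ 1) (le_max_right _ _)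
  have hbN : N ≤ b := le_max_left _ _
  set Sb := ∑ m ∈ Finset.Icc 1 b, a m with hSb
  have key : ∀ n, b ≤ n →
      ∑ m ∈ Finset.Icc 1 n, a m ≤ Sb + (C / 2) * (Real.log n - Real.log b) := by
    intro n hn
    induction n, hn using Nat.le_induction with
    | base => simp [hSb]
    | succ n hn ih =>
      have hn1 : (1:ℝ) ≤ (n:ℝ) := by exact_mod_cast le_trans hb1 hn
      have hsplit : ∑ m ∈ Finset.Icc 1 (n+1), a m
          = (∑ m ∈ Finset.Icc 1 n, a m) + a (n+1) := by
        rw [Finset.sum_Icc_succ_top (by omega)]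
      have han : a (n+1) < C / (2 * ((n:ℝ)+1)) := by
        have := not_le.1 (hN (n+1) (by omega))
        simpa using this
      have hlogstep : (1:ℝ) / ((n:ℝ)+1) ≤ Real.log ((n:ℝ)+1) - Real.log n := by
        have hpos : (0:ℝ) < (n:ℝ) / ((n:ℝ)+1) := by positivity
        have h1 := Real.log_le_sub_one_of_pos hpos
        have hlogdiv : Real.log ((n:ℝ) / ((n:ℝ)+1)) = Real.log n - Real.log ((n:ℝ)+1) :=
          Real.log_div (by linarith) (by linarith)
        rw [hlogdiv] at h1
        have : (n:ℝ) / ((n:ℝ)+1) - 1 = -(1 / ((n:ℝ)+1)) := by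
          field_simp
          ring
        rw [this] at h1
        linarith
      have hstep : a (n+1) ≤ (C / 2) * (Real.log ((n:ℝ)+1) - Real.log n) := by
        have heq : C / (2 * ((n:ℝ)+1)) = (C / 2) * (1 / ((n:ℝ)+1)) := by
          have : ((n:ℝ)+1) ≠ 0 := by linarith
          field_simp
        have h2 := mul_le_mul_of_nonneg_left hlogstep (le_of_lt (half_pos hC))
        linarith
      have hcast : ((n:ℝ)+1) = ((n+1 : ℕ) : ℝ) := by push_cast; ring
      rw [hsplit]
      rw [← hcast] at *
      push_cast
      linarith
  have hbpos : (1:ℝ) ≤ (b:ℝ) := by exact_mod_cast hb1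
  -- For all n ≥ b : (C/2) * log n ≤ K
  set K := Sb - (C / 2) * Real.log b with hK
  have hbound : ∀ n : ℕ, b ≤ n → (C / 2) * Real.log n ≤ K := by
    intro n hn
    have h1 := hsum n (le_trans hbn0 hn)
    have h2 := key n hn
    have : C * Real.log n ≤ Sb + (C / 2) * (Real.log n - Real.log b) := le_trans h1 h2
    rw [hK]; nlinarith
  -- choose n large
  set n := b + ⌈Real.exp (2 * K / C)⌉₊ + 1 with hn
  have hnb : b ≤ n := by omega
  have hexp : Real.exp (2 * K / C) < (n:ℝ) := by
    have h1 : Real.exp (2 * K / C) ≤ (⌈Real.exp (2 * K / C)⌉₊ : ℝ) := Nat.le_ceil _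
    have h2 : ((⌈Real.exp (2 * K / C)⌉₊ : ℕ) : ℝ) < (n:ℝ) := by
      exact_mod_cast (by omega : ⌈Real.exp (2 * K / C)⌉₊ < n)
    linarith
  have hnpos : (0:ℝ) < (n:ℝ) := by
    have : 0 < n := by omega
    exact_mod_cast this
  have hlogn : 2 * K / C < Real.log n := (Real.lt_log_iff_exp_lt hnpos).2 hexp
  rw [div_lt_iff₀ hC] at hlogn
  have := hbound n hnb
  clear_value n K Sb
  linarith [hlogn, this]
end

section
/- Consider two coupled queues driven by the same arrival process A(t): Q(t) = (Q(t−1) + A(t) − S(t))⁺ and Q*(t) = (Q*(t−1) + A(t) − S*(t))⁺. Suppose Q(t−B(t)) = 0 where B(t) = min{s ≥ 0 : Q(t−s) = 0}. Then Q(t) − Q*(t) ≤ ∑_{l=t−B(t)+1}^{t} (S*(l) − S(l)). -/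
/-- For two coupled Lindley queues driven by the same arrivals, with `B(t)` the age of the
current busy period of `Q` (so `Q(t - B(t)) = 0` and `Q > 0` since then),
`Q(t) - Q*(t) ≤ ∑_{l=t-B(t)+1}^t (S*(l) - S(l))`. -/
theorem queue_regret_le_service_diff (Q Qstar A S Sstar : ℕ → ℤ)
    (hA : ∀ l, A l = 0 ∨ A l = 1) (hS : ∀ l, S l = 0 ∨ S l = 1)
    (hSstar : ∀ l, Sstar l = 0 ∨ Sstar l = 1)
    (hQ0 : 0 ≤ Q 0) (hQstar0 : 0 ≤ Qstar 0)
    (hrec : ∀ l, 1 ≤ l → Q l = max (Q (l - 1) + A l - S l) 0)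
    (hrecstar : ∀ l, 1 ≤ l → Qstar l = max (Qstar (l - 1) + A l - Sstar l) 0)
    {t B : ℕ} (hB : B ≤ t)
    (hzero : Q (t - B) = 0)
    (hmin : ∀ s, s < B → Q (t - s) ≠ 0) :
    Q t - Qstar t ≤ ∑ l ∈ Finset.Icc (t - B + 1) t, (Sstar l - S l) := by
  have hQstarpos : ∀ l, 0 ≤ Qstar l := by
    intro l
    induction l with
    | zero => exact hQstar0
    | succ n ih =>
      rw [hrecstar (n+1) (Nat.le_add_left 1 n)]
      exact le_max_right _ _
  set m := t - B with hm
  have key : ∀ k, k ≤ B →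
      Q (m + k) - Qstar (m + k) ≤ ∑ l ∈ Finset.Icc (m + 1) (m + k), (Sstar l - S l) := by
    intro k hk
    induction k with
    | zero =>
      simp only [Nat.add_zero]
      rw [hzero]
      have : Finset.Icc (m + 1) m = ∅ := by
        apply Finset.Icc_eq_empty
        omega
      rw [this]
      simpa using hQstarpos m
    | succ n ih =>
      have hn : n ≤ B := Nat.le_of_succ_le hk
      have ih' := ih hn
      have h1 : 1 ≤ m + n + 1 := by omega
      have hQrec := hrec (m + n + 1) h1
      have hQsrec := hrecstar (m + n + 1) h1
      simp only [Nat.add_sub_cancel] at hQrec hQsrec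
      -- Q (m+n+1) ≠ 0
      have hne : Q (m + n + 1) ≠ 0 := by
        have hs : B - (n + 1) < B := by omega
        have := hmin (B - (n + 1)) hs
        have heq : t - (B - (n + 1)) = m + n + 1 := by omega
        rwa [heq] at this
      have hQval : Q (m + n + 1) = Q (m + n) + A (m + n + 1) - S (m + n + 1) := by
        rcases le_or_gt (Q (m + n) + A (m + n + 1) - S (m + n + 1)) 0 with h | h
        · exfalso; apply hne; rw [hQrec]; exact max_eq_right h
        · rw [hQrec]; exact max_eq_left h.le
      have hQsge : Qstar (m + n) + A (m + n + 1) - Sstar (m + n + 1) ≤ Qstar (m + n + 1) := by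
        rw [hQsrec]; exact le_max_left _ _
      have hsum : ∑ l ∈ Finset.Icc (m + 1) (m + n + 1), (Sstar l - S l)
          = (∑ l ∈ Finset.Icc (m + 1) (m + n), (Sstar l - S l))
            + (Sstar (m + n + 1) - S (m + n + 1)) := by
        rw [Finset.sum_Icc_succ_top (by omega : m + 1 ≤ m + n + 1)]
      have : Q (m + n + 1) - Qstar (m + n + 1)
          ≤ (Q (m + n) - Qstar (m + n)) + (Sstar (m + n + 1) - S (m + n + 1)) := by
        rw [hQval]; omega
      calc Q (m + (n + 1)) - Qstar (m + (n + 1)) = Q (m + n + 1) - Qstar (m + n + 1) := by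
            ring_nf
        _ ≤ (Q (m + n) - Qstar (m + n)) + (Sstar (m + n + 1) - S (m + n + 1)) := this
        _ ≤ (∑ l ∈ Finset.Icc (m + 1) (m + n), (Sstar l - S l))
            + (Sstar (m + n + 1) - S (m + n + 1)) := by linarith
        _ = ∑ l ∈ Finset.Icc (m + 1) (m + (n + 1)), (Sstar l - S l) := by
            rw [← hsum]; ring_nf
      done
  have := key B le_rfl
  have hmb : m + B = t := by omega
  rwa [hmb] at this
end

section
/- Lower bound on queue regret via suboptimal play count: consider a single queue with Bernoulli(λ) arrivals and K servers with Bernoulli service rates μ_1,…,μ_K, optimal server k* with rate μ* = max_k μ_k, and ε = μ* − λ. For any scheduling policy, if Q(0) is distributed according to the stationary distribution of the optimal queue (so E[Q(t)] − E[Q*(t)] = E[Q(t)] − E[Q(0)] with Q* stationary), then the regret satisfies Ψ(t) = E[Q(t) − Q*(t)] ≥ ∑_{k ≠ k*} Δ_k · E[T_k(t)] − ε·t, where Δ_k = μ* − μ_k and T_k(t) is the number of times server k is scheduled in the first t slots. -/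
open MeasureTheory Real
open scoped ENNReal

/-- Lower bound on queue regret via the suboptimal play count: for a single queue with
Bernoulli(λ) arrivals and `K` servers with rates `μ`, optimal server `k*` (rate
`μ* = max_k μ_k`, `ε = μ* - λ`), if the initial queue length is stationary for the optimal
policy (so that `E[Q*(t)] = E[Q(0)]`), then
`Ψ(t) = E[Q(t) - Q*(t)] ≥ ∑_{k ≠ k*} Δ_k E[T_k(t)] - ε t`. -/
theorem queue_regret_lower_via_suboptimal_count
    {Ω : Type*} [MeasurableSpace Ω] (P : Measure Ω) [IsProbabilityMeasure P]
    (K : ℕ) (μ : Fin K → ℝ) (lam : ℝ) (kstar : Fin K)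
    (hopt : ∀ k, μ k ≤ μ kstar)
    (Q Qstar : ℕ → Ω → ℝ) (A S : ℕ → Ω → ℝ) (κ : ℕ → Ω → Fin K)
    (hκ : ∀ l, Measurable (κ l))
    (hint : ∀ l, Integrable (Q l) P)
    (hintA : ∀ l, Integrable (A l) P) (hintS : ∀ l, Integrable (S l) P)
    (hrec : ∀ l ω, 1 ≤ l → Q l ω = max (Q (l - 1) ω + A l ω - S l ω) 0)
    (hA : ∀ l, ∫ ω, A l ω ∂P = lam)
    (hS : ∀ l, ∫ ω, S l ω ∂P = ∑ k, μ k * (P {ω | κ l ω = k}).toReal)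
    (t : ℕ)
    (hstat : ∫ ω, Qstar t ω ∂P = ∫ ω, Q 0 ω ∂P) :
    (∫ ω, Q t ω ∂P) - (∫ ω, Qstar t ω ∂P)
      ≥ (∑ k ∈ Finset.univ \ {kstar},
            (μ kstar - μ k) * ∑ l ∈ Finset.Icc 1 t, (P {ω | κ l ω = k}).toReal)
        - (μ kstar - lam) * t := by
  -- pointwise lower bound
  have hpt : ∀ n ω, Q 0 ω + ∑ l ∈ Finset.Icc 1 n, (A l ω - S l ω) ≤ Q n ω := by
    intro n
    induction n with
    | zero => intro ω; simp
    | succ n ih =>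
      intro ω
      have h1 : Q (n+1) ω = max (Q n ω + A (n+1) ω - S (n+1) ω) 0 := by
        simpa using hrec (n+1) ω (by omega)
      rw [Finset.sum_Icc_succ_top (by omega : 1 ≤ n + 1)]
      have h2 := le_max_left (Q n ω + A (n+1) ω - S (n+1) ω) (0:ℝ)
      have h3 := ih ω
      rw [h1]; linarith
  -- probabilities sum to one
  have hsum1 : ∀ l, ∑ k, ((P {ω | κ l ω = k}).toReal) = 1 := by
    intro l
    have hd : Pairwise (Function.onFun Disjoint fun k : Fin K => {ω | κ l ω = k}) := by
      intro i j hij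
      simp only [Function.onFun, Set.disjoint_left]
      intro ω hi hj
      exact hij (hi.symm.trans hj)
    have hm : ∀ k : Fin K, MeasurableSet {ω | κ l ω = k} := fun k =>
      (hκ l) (measurableSet_singleton k)
    have hU : (⋃ k : Fin K, {ω | κ l ω = k}) = Set.univ := by
      ext ω; simp
    have hmu := measure_iUnion (μ := P) hd hm
    rw [hU] at hmu
    have h1 : ∑ k, P {ω | κ l ω = k} = 1 := by
      rw [← tsum_fintype (L := .unconditional _), ← hmu, measure_univ]
    have h2 := congrArg ENNReal.toReal h1
    rw [ENNReal.toReal_sum (fun k _ => measure_ne_top P _)] at h2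
    simpa using h2
  -- integrate
  have hInt2 : Integrable (fun ω => ∑ l ∈ Finset.Icc 1 t, (A l ω - S l ω)) P :=
    integrable_finset_sum _ (fun l _ => (hintA l).sub (hintS l))
  have hIle : (∫ ω, Q 0 ω ∂P) + ∑ l ∈ Finset.Icc 1 t, (lam - ∑ k, μ k * (P {ω | κ l ω = k}).toReal)
      ≤ ∫ ω, Q t ω ∂P := by
    have hInt : Integrable (fun ω => Q 0 ω + ∑ l ∈ Finset.Icc 1 t, (A l ω - S l ω)) P :=
      (hint 0).add hInt2
    have hle := integral_mono hInt (hint t) (hpt t)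
    have e1 : ∫ ω, (Q 0 ω + ∑ l ∈ Finset.Icc 1 t, (A l ω - S l ω)) ∂P
        = (∫ ω, Q 0 ω ∂P) + ∑ l ∈ Finset.Icc 1 t, (lam - ∑ k, μ k * (P {ω | κ l ω = k}).toReal) := by
      rw [integral_add (hint 0) hInt2,
        integral_finset_sum (f := fun l ω => A l ω - S l ω) _ (fun l _ => (hintA l).sub (hintS l))]
      congr 1
      refine Finset.sum_congr rfl (fun l _ => ?_)
      rw [integral_sub (hintA l) (hintS l), hA l, hS l]
    rw [e1] at hle
    exact hle
  rw [hstat, ge_iff_le]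
  -- rewrite per-slot deficit
  have hslot : ∀ l, lam - ∑ k, μ k * (P {ω | κ l ω = k}).toReal
      = (∑ k ∈ Finset.univ \ {kstar}, (μ kstar - μ k) * (P {ω | κ l ω = k}).toReal)
        - (μ kstar - lam) := by
    intro l
    have hsd : (∑ k ∈ Finset.univ \ {kstar}, (μ kstar - μ k) * (P {ω | κ l ω = k}).toReal)
        + ∑ k ∈ {kstar}, (μ kstar - μ k) * (P {ω | κ l ω = k}).toReal
        = ∑ k, (μ kstar - μ k) * (P {ω | κ l ω = k}).toReal :=
      Finset.sum_sdiff (Finset.subset_univ _)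
    have hz : ∑ k ∈ ({kstar} : Finset (Fin K)), (μ kstar - μ k) * (P {ω | κ l ω = k}).toReal = 0 := by
      simp
    have hexp : ∑ k, (μ kstar - μ k) * (P {ω | κ l ω = k}).toReal
        = μ kstar - ∑ k, μ k * (P {ω | κ l ω = k}).toReal := by
      simp only [sub_mul]
      rw [Finset.sum_sub_distrib, ← Finset.mul_sum, hsum1 l, mul_one]
    rw [hz, add_zero] at hsd
    rw [hsd, hexp]; ring
  have hswap : ∑ l ∈ Finset.Icc 1 t, (lam - ∑ k, μ k * (P {ω | κ l ω = k}).toReal)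
      = (∑ k ∈ Finset.univ \ {kstar},
          (μ kstar - μ k) * ∑ l ∈ Finset.Icc 1 t, (P {ω | κ l ω = k}).toReal)
        - (μ kstar - lam) * t := by
    rw [Finset.sum_congr rfl (fun l _ => hslot l), Finset.sum_sub_distrib, Finset.sum_comm]
    simp [Finset.mul_sum, Nat.card_Icc, mul_comm]; ring
  rw [hswap] at hIle
  linarith
end
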